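/- For finite nonempty sets A, B of real numbers, ∑_{s ∈ A−A} |(A ∩ (A+s)) + B| · |A ∩ (A+s)| ≤ E(A, A + B). -/
import Mathlib


open Finset Pointwise

noncomputable def shiftSet (A : Finset ℝ) (s : ℝ) : Finset ℝ := A.image (· + s)

noncomputable def Asub (A : Finset ℝ) (s : ℝ) : Finset ℝ := A ∩ shiftSet A s

noncomputable def dXY (X Y : Finset ℝ) (s : ℝ) : ℕ :=
  ((X ×ˢ Y).filter (fun p => p.1 - p.2 = s)).card

/-- `E(X,Y) = ∑_s δ_X(s) δ_Y(s)`. -/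
noncomputable def energy (X Y : Finset ℝ) : ℝ :=
  ∑ s ∈ X - X, (dXY X X s : ℝ) * (dXY Y Y s : ℝ)

lemma dXY_eq_card (X : Finset ℝ) (s : ℝ) : dXY X X s = (Asub X s).card := by
  unfold dXY Asub shiftSet
  rw [eq_comm]
  apply Finset.card_bij (fun x _ => (x, x - s))
  · intro x hx
    simp only [Finset.mem_inter, Finset.mem_image, Finset.mem_filter,
      Finset.mem_product] at *
    obtain ⟨hx1, a, ha, hax⟩ := hx
    refine ⟨⟨hx1, ?_⟩, by ring⟩
    have : x - s = a := by linarith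
    rwa [this]
  · intro a ha b hb h
    exact (Prod.mk.injEq _ _ _ _ ▸ h).1
  · intro p hp
    simp only [Finset.mem_filter, Finset.mem_product] at hp
    refine ⟨p.1, ?_, ?_⟩
    · simp only [Finset.mem_inter, Finset.mem_image]
      exact ⟨hp.1.1, p.2, hp.1.2, by linarith [hp.2]⟩
    · have : p.1 - s = p.2 := by linarith [hp.2]
      simp [this]

lemma asub_add_subset (A B : Finset ℝ) (s : ℝ) :
    Asub A s + B ⊆ Asub (A + B) s := by
  intro x hx
  rw [Finset.mem_add] at hx
  obtain ⟨a, ha, b, hb, rfl⟩ := hx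
  simp only [Asub, shiftSet, Finset.mem_inter, Finset.mem_image] at ha ⊢
  obtain ⟨ha1, a', ha', haa⟩ := ha
  constructor
  · exact Finset.add_mem_add ha1 hb
  · exact ⟨a' + b, Finset.add_mem_add ha' hb, by linarith⟩

theorem stmt18 (A B : Finset ℝ) (hA : A.Nonempty) (hB : B.Nonempty) :
    ∑ s ∈ A - A, ((((Asub A s) + B).card : ℝ) * ((Asub A s).card : ℝ)) ≤
      energy A (A + B) := by
  unfold energy
  apply Finset.sum_le_sum
  intro s _
  rw [dXY_eq_card, dXY_eq_card]
  have h1 : ((Asub A s + B).card : ℝ) ≤ ((Asub (A + B) s).card : ℝ) := by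
    exact_mod_cast Finset.card_le_card (asub_add_subset A B s)
  have h2 : (0 : ℝ) ≤ ((Asub A s).card : ℝ) := by positivity
  calc ((Asub A s + B).card : ℝ) * ((Asub A s).card : ℝ)
      ≤ ((Asub (A + B) s).card : ℝ) * ((Asub A s).card : ℝ) :=
        mul_le_mul_of_nonneg_right h1 h2
    _ = ((Asub A s).card : ℝ) * ((Asub (A + B) s).card : ℝ) := mul_comm _ _
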